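/- Let α be an irrational real number with 0 < α < 1/2, let k ≥ 0, and let s be the singular factor of length q_k. If w is a factor of slope α that does not have abelian period q_k, then s occurs in w at least q_k times, i.e., there are at least q_k distinct indices i with 0 ≤ i ≤ |w| − q_k such that w restricted to positions i, …, i + q_k − 1 equals s. -/

import Mathlib

open scoped Classical

noncomputable section

namespace SturmianAbelian

/-- Complete quotients: `cq α t = α_t` for `t ≥ 1`; `cq α 0 = α` is a dummy value chosen so that
`cq α 1 = 1/(α - ⌊α⌋) = 1/α` when `0 < α < 1`. -/
noncomputable def cq (α : ℝ) : ℕ → ℝ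
  | 0 => α
  | t + 1 => (cq α t - ⌊cq α t⌋)⁻¹

/-- Partial quotients: `pq α t = a_t = ⌊α_t⌋` for `t ≥ 1`. -/
noncomputable def pq (α : ℝ) (t : ℕ) : ℕ := (⌊cq α t⌋).toNat

/-- Denominators of the convergents of `α`: `qd α k = q_k`, with
`q_0 = 1`, `q_1 = a_1`, `q_k = a_k q_{k-1} + q_{k-2}`. -/
noncomputable def qd (α : ℝ) : ℕ → ℕ
  | 0 => 1
  | 1 => pq α 1
  | (k + 2) => pq α (k + 2) * qd α (k + 1) + qd α k

/-- Distance from `x` to the nearest integer, `‖x‖`. -/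
noncomputable def nint (x : ℝ) : ℝ := min (Int.fract x) (1 - Int.fract x)

/-- The representative of `x` modulo 1 lying in `(0, 1]`. -/
noncomputable def fract' (x : ℝ) : ℝ := 1 - Int.fract (-x)

/-- The Sturmian word of slope `α` and intercept `ρ` in the lower convention:
`s n = 1` iff the fractional part of `ρ + nα` lies in `[1 - α, 1)`. -/
noncomputable def lowerWord (α ρ : ℝ) (n : ℕ) : Bool :=
  if 1 - α ≤ Int.fract (ρ + (n : ℝ) * α) then true else false

/-- The Sturmian word of slope `α` and intercept `ρ` in the upper convention:
`s n = 1` iff the representative of `ρ + nα` modulo 1 in `(0,1]` lies in `(1 - α, 1]`. -/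
noncomputable def upperWord (α ρ : ℝ) (n : ℕ) : Bool :=
  if 1 - α < fract' (ρ + (n : ℝ) * α) then true else false

/-- `s` is a Sturmian word of slope `α` (either convention, some intercept `ρ ∈ [0,1)`). -/
def IsSturmian (α : ℝ) (s : ℕ → Bool) : Prop :=
  ∃ ρ : ℝ, 0 ≤ ρ ∧ ρ < 1 ∧ (s = lowerWord α ρ ∨ s = upperWord α ρ)

/-- `w` is a (finite, contiguous) factor of the infinite word `s`. -/
def FactorOf (s : ℕ → Bool) (w : List Bool) : Prop :=
  ∃ i : ℕ, w = (List.range w.length).map fun j => s (i + j)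

/-- `w` is a factor of slope `α`. -/
def IsFactor (α : ℝ) (w : List Bool) : Prop :=
  ∃ s : ℕ → Bool, IsSturmian α s ∧ FactorOf s w

/-- Abelian equivalence: same length and the same number of occurrences of the letter 1. -/
def AbEq (u v : List Bool) : Prop :=
  u.length = v.length ∧ u.count true = v.count true

/-- `u` is an abelian power of period `m` and exponent `e`: a concatenation of `e ≥ 2` pairwise
abelian equivalent blocks, each of length `m ≥ 1`. -/
def IsAbelianPower (m e : ℕ) (u : List Bool) : Prop :=
  1 ≤ m ∧ 2 ≤ e ∧ u.length = e * m ∧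
  ∀ i < e, ∀ j < e, AbEq ((u.drop (i * m)).take m) ((u.drop (j * m)).take m)

/-- `w` has abelian period `m`: `w` is a contiguous factor of some abelian power of period `m`. -/
def HasAbPeriod (w : List Bool) (m : ℕ) : Prop :=
  ∃ e u, IsAbelianPower m e u ∧ w <:+: u

/-- `m` is the minimum abelian period of `w`. -/
def MinAbPeriod (w : List Bool) (m : ℕ) : Prop :=
  IsLeast {p : ℕ | HasAbPeriod w p} m

/-- `M(α) = {t·q_k : k ≥ 0, 1 ≤ t ≤ a_{k+1}}`. -/
def Mset (α : ℝ) : Set ℕ :=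
  {m | ∃ k t : ℕ, 1 ≤ t ∧ t ≤ pq α (k + 1) ∧ m = t * qd α k}

/-- The set of denominators of convergents and semiconvergents of `α`. -/
def Qsc (α : ℝ) : Set ℕ :=
  {m | (∃ k : ℕ, m = qd α k) ∨
    ∃ k l : ℕ, 1 ≤ k ∧ 1 ≤ l ∧ l < pq α (k + 1) ∧ m = l * qd α k + qd α (k - 1)}

/-- The singular factor of length `q_k`: the unique factor of slope `α` of length `q_k` that is not
abelian equivalent to any other factor of slope `α` of the same length. -/
def IsSingular (α : ℝ) (k : ℕ) (s : List Bool) : Prop :=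
  IsFactor α s ∧ s.length = qd α k ∧
  ∀ u : List Bool, IsFactor α u → u.length = qd α k → u ≠ s → ¬ AbEq u s

/-- `v` occurs in `u` at position `i`. -/
def OccursAt (v u : List Bool) (i : ℕ) : Prop :=
  i + v.length ≤ u.length ∧ (u.drop i).take v.length = v

/-- `u` is a complete first return to `v`: `v` is a prefix and a suffix of `u` and `v` has exactly
two occurrences in `u`. -/
def CompleteFirstReturn (v u : List Bool) : Prop :=
  v <+: u ∧ v <:+ u ∧ {i | OccursAt v u i}.ncard = 2

/-- `u` is a complete first return to `v` in the same phase. -/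
def CFRSamePhase (v u : List Bool) : Prop :=
  v <+: u ∧ v <:+ u ∧ u.length % v.length = 0 ∧
  2 ≤ {i | OccursAt v u i}.ncard ∧
  ∀ i : ℕ, OccursAt v u i → i % v.length = 0 → i = 0 ∨ i = u.length - v.length

/-! ### Auxiliary development -/

section NT

variable {α : ℝ} (hirr : Irrational α) (h0 : 0 < α) (h2 : α < 1 / 2)

lemma cq_one_eq (h0 : 0 < α) (h2 : α < 1 / 2) : cq α 1 = α⁻¹ := by
  have h1 : α < 1 := by linarith
  have : ⌊α⌋ = 0 := Int.floor_eq_zero_iff.mpr ⟨le_of_lt h0, h1⟩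
  simp [cq, this]

include hirr h0 h2 in
lemma cq_props : ∀ t : ℕ, Irrational (cq α (t + 1)) ∧ 1 < cq α (t + 1) := by
  intro t
  induction t with
  | zero =>
    rw [cq_one_eq h0 h2]
    exact ⟨hirr.inv, one_lt_inv₀ h0 |>.2 (by linarith)⟩
  | succ t ih =>
    obtain ⟨hi, hl⟩ := ih
    have hirr' : Irrational (cq α (t + 1) - ⌊cq α (t + 1)⌋) := by
      simpa using hi.sub_intCast ⌊cq α (t + 1)⌋
    have hpos : 0 < cq α (t + 1) - ⌊cq α (t + 1)⌋ := by
      have h1 := Int.fract_nonneg (cq α (t + 1))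
      have h2' : Int.fract (cq α (t + 1)) ≠ 0 := by
        have : Int.fract (cq α (t + 1)) = cq α (t + 1) - ⌊cq α (t + 1)⌋ := rfl
        rw [this]; exact hirr'.ne_zero
      have : Int.fract (cq α (t + 1)) = cq α (t + 1) - ⌊cq α (t + 1)⌋ := rfl
      rw [← this]; exact lt_of_le_of_ne h1 (Ne.symm h2')
    have hlt1 : cq α (t + 1) - ⌊cq α (t + 1)⌋ < 1 := by
      have := Int.fract_lt_one (cq α (t + 1)); exact this
    exact ⟨hirr'.inv, one_lt_inv₀ hpos |>.2 hlt1⟩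

noncomputable def pn (α : ℝ) : ℕ → ℕ
  | 0 => 0
  | 1 => 1
  | (k + 2) => pq α (k + 2) * pn α (k + 1) + pn α k

/-- `E α k = (-1)^k (q_k α - p_k)`. -/
noncomputable def En (α : ℝ) (k : ℕ) : ℝ :=
  (-1) ^ k * ((qd α k : ℝ) * α - (pn α k : ℝ))

include hirr h0 h2 in
lemma pq_cast (t : ℕ) : ((pq α (t + 1) : ℝ)) = ((⌊cq α (t + 1)⌋ : ℤ) : ℝ) := by
  have h1 := (cq_props hirr h0 h2 t).2
  have : (1 : ℤ) ≤ ⌊cq α (t + 1)⌋ := by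
    rw [Int.le_floor]; exact_mod_cast h1.le
  rw [pq]
  exact_mod_cast congrArg (fun z : ℤ => (z : ℝ)) (Int.toNat_of_nonneg (by omega))

include hirr h0 h2 in
lemma pq_pos (t : ℕ) : 1 ≤ pq α (t + 1) := by
  have h1 := (cq_props hirr h0 h2 t).2
  have : (1 : ℤ) ≤ ⌊cq α (t + 1)⌋ := by rw [Int.le_floor]; exact_mod_cast h1.le
  rw [pq]; omega

include hirr h0 h2 in
lemma qd_pos : ∀ k, 1 ≤ qd α k
  | 0 => le_refl 1
  | 1 => by rw [qd]; exact pq_pos hirr h0 h2 0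
  | (k + 2) => by
      rw [qd]
      have := qd_pos (k + 1)
      have := pq_pos hirr h0 h2 (k + 1)
      nlinarith [qd_pos k]

lemma En_zero : En α 0 = α := by simp [En, qd, pn]

lemma En_one : En α 1 = 1 - (pq α 1 : ℝ) * α := by
  simp [En, qd, pn]

lemma En_linrec (k : ℕ) :
    En α (k + 2) = En α k - (pq α (k + 2) : ℝ) * En α (k + 1) := by
  show (-1:ℝ)^(k+2) * ((qd α (k+2) : ℝ) * α - (pn α (k+2) : ℝ)) = _
  rw [qd, pn, En, En]
  push_cast
  ring

include hirr h0 h2 in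
lemma En_rec : ∀ k : ℕ, En α (k + 1) * cq α (k + 2) = En α k := by
  intro k
  induction k with
  | zero =>
    have hprops := cq_props hirr h0 h2 0
    have hcast := pq_cast hirr h0 h2 0
    have hcq2 : cq α 2 = (cq α 1 - (⌊cq α 1⌋ : ℝ))⁻¹ := rfl
    have hirr1 : Irrational (cq α 1 - (⌊cq α 1⌋:ℤ)) := by
      simpa using hprops.1.sub_intCast ⌊cq α 1⌋
    have hne : cq α 1 - ((⌊cq α 1⌋:ℤ):ℝ) ≠ 0 := hirr1.ne_zero
    have hne' : cq α 1 - ((pq α 1 : ℕ) : ℝ) ≠ 0 := by rw [hcast]; exact hne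
    rw [En_one, En_zero, hcq2, ← hcast, mul_inv_eq_iff_eq_mul₀ hne', cq_one_eq h0 h2]
    field_simp
  | succ k ih =>
    have hprops := cq_props hirr h0 h2 (k + 1)
    have hcast := pq_cast hirr h0 h2 (k + 1)
    have hcq : cq α (k + 3) = (cq α (k + 2) - (⌊cq α (k + 2)⌋ : ℝ))⁻¹ := rfl
    have hirr1 : Irrational (cq α (k+2) - (⌊cq α (k+2)⌋:ℤ)) := by
      simpa using hprops.1.sub_intCast ⌊cq α (k+2)⌋
    have hne : cq α (k+2) - ((⌊cq α (k+2)⌋:ℤ):ℝ) ≠ 0 := hirr1.ne_zero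
    have hne' : cq α (k+2) - ((pq α (k+2) : ℕ) : ℝ) ≠ 0 := by rw [hcast]; exact hne
    rw [hcq, ← hcast, mul_inv_eq_iff_eq_mul₀ hne', En_linrec, ← ih]
    ring

include hirr h0 h2 in
lemma En_pos : ∀ k, 0 < En α k := by
  intro k
  induction k with
  | zero => rw [En_zero]; exact h0
  | succ k ih =>
    have hrec := En_rec hirr h0 h2 k
    have hcq := (cq_props hirr h0 h2 (k + 1)).2
    nlinarith [hrec, ih, hcq]

include hirr h0 h2 in
lemma En_strict (k : ℕ) : En α (k + 1) < En α k := by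
  have hrec := En_rec hirr h0 h2 k
  have hcq := (cq_props hirr h0 h2 (k + 1)).2
  have hp := En_pos hirr h0 h2 (k + 1)
  nlinarith

include hirr h0 h2 in
lemma En_lt_alpha (k : ℕ) (hk : 1 ≤ k) : En α k < α := by
  induction k with
  | zero => omega
  | succ k ih =>
    rcases Nat.eq_zero_or_pos k with rfl | hk'
    · have := En_strict hirr h0 h2 0; rwa [En_zero] at this
    · exact lt_trans (En_strict hirr h0 h2 k) (ih hk')

include hirr h0 h2 in
lemma En_lt_one (k : ℕ) : En α k < 1 := by
  rcases Nat.eq_zero_or_pos k with rfl | hk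
  · rw [En_zero]; linarith
  · have := En_lt_alpha hirr h0 h2 k hk; linarith

lemma qd_alpha_sub (k : ℕ) : (qd α k : ℝ) * α - (pn α k : ℝ) = (-1) ^ k * En α k := by
  rw [En, ← mul_assoc, ← pow_add]
  rcases Nat.even_or_odd k with h | h
  · rw [(by omega : k + k = 2 * k), pow_mul]; norm_num
  · obtain ⟨m, rfl⟩ := h
    rw [(by ring : (2*m+1) + (2*m+1) = 2 * (2*m+1)), pow_mul]; norm_num

lemma det_qp : ∀ k : ℕ, (pn α (k+1) : ℤ) * (qd α k : ℤ) - (pn α k : ℤ) * (qd α (k+1) : ℤ) = (-1) ^ k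
  | 0 => by simp [pn, qd]
  | (k + 1) => by
    have ih := det_qp k
    rw [pn, qd]
    push_cast
    ring_nf
    ring_nf at ih
    linarith [ih]

include hirr h0 h2 in
lemma best_approx (k : ℕ) (j : ℕ) (i : ℤ) (hj1 : 1 ≤ j) (hj2 : j < qd α (k + 1)) :
    En α k ≤ |(j : ℝ) * α - (i : ℝ)| := by
  classical
  set u : ℤ := (-1) ^ k * ((pn α (k+1) : ℤ) * (j : ℤ) - (qd α (k+1) : ℤ) * i) with hu
  set v : ℤ := (-1) ^ k * ((qd α k : ℤ) * i - (pn α k : ℤ) * (j : ℤ)) with hv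
  have hdet := det_qp (α := α) k
  have hsq : ((-1 : ℤ) ^ k) * ((-1 : ℤ) ^ k) = 1 := by
    rw [← pow_add, (by omega : k + k = 2 * k), pow_mul]; norm_num
  have hj' : (j : ℤ) = u * (qd α k : ℤ) + v * (qd α (k+1) : ℤ) := by
    rw [hu, hv]
    linear_combination (-(((-1:ℤ)^k) * (j:ℤ))) * hdet - (j:ℤ) * hsq
  have hi' : i = u * (pn α k : ℤ) + v * (pn α (k+1) : ℤ) := by
    rw [hu, hv]
    linear_combination (-(((-1:ℤ)^k) * i)) * hdet - i * hsq
  have hqk := qd_alpha_sub (α := α) k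
  have hqk1 := qd_alpha_sub (α := α) (k+1)
  have hsplit : (j : ℝ) * α - (i : ℝ)
      = (u : ℝ) * ((qd α k : ℝ) * α - (pn α k : ℝ)) + (v : ℝ) * ((qd α (k+1) : ℝ) * α - (pn α (k+1) : ℝ)) := by
    have h1 : ((j : ℤ) : ℝ) = (u : ℝ) * ((qd α k : ℕ) : ℝ) + (v : ℝ) * ((qd α (k+1) : ℕ) : ℝ) := by
      exact_mod_cast congrArg (fun z : ℤ => (z : ℝ)) hj'
    have h2' : ((i : ℤ) : ℝ) = (u : ℝ) * ((pn α k : ℕ) : ℝ) + (v : ℝ) * ((pn α (k+1) : ℕ) : ℝ) := by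
      exact_mod_cast congrArg (fun z : ℤ => (z : ℝ)) hi'
    push_cast at h1 h2' ⊢
    rw [h1, h2']
    ring
  have hsgn : ((-1:ℝ)^k) * ((-1:ℝ)^k) = 1 := by
    rw [← pow_add, (by omega : k + k = 2 * k), pow_mul]; norm_num
  have habs : |(j : ℝ) * α - (i : ℝ)| = |(u : ℝ) * En α k - (v : ℝ) * En α (k+1)| := by
    rw [hsplit, hqk, hqk1]
    have : (u:ℝ) * ((-1)^k * En α k) + (v:ℝ) * ((-1)^(k+1) * En α (k+1))
        = (-1:ℝ)^k * ((u:ℝ) * En α k - (v:ℝ) * En α (k+1)) := by ring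
    rw [this, abs_mul, abs_pow, abs_neg, abs_one, one_pow, one_mul]
  rw [habs]
  have hEk := En_pos hirr h0 h2 k
  have hEk1 := En_pos hirr h0 h2 (k+1)
  have hqdk : 1 ≤ qd α k := qd_pos hirr h0 h2 k
  -- case analysis
  rcases lt_trichotomy v 0 with hvneg | hvz | hvpos
  · -- v ≤ -1 : u ≥ 1
    have hv1 : v ≤ -1 := by omega
    have hupos : 1 ≤ u := by
      by_contra hcon
      push_neg at hcon
      have : u ≤ 0 := by omega
      have h1 : u * (qd α k : ℤ) ≤ 0 := mul_nonpos_of_nonpos_of_nonneg this (by positivity)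
      have h2' : v * (qd α (k+1) : ℤ) ≤ -(qd α (k+1) : ℤ) := by nlinarith [hv1]
      omega
    have h1 : (1:ℝ) ≤ (u:ℝ) := by exact_mod_cast hupos
    have h2' : (v:ℝ) ≤ -1 := by exact_mod_cast hv1
    have t1 : En α k ≤ (u:ℝ) * En α k := le_mul_of_one_le_left hEk.le h1
    have t2 : (v:ℝ) * En α (k+1) ≤ -1 * En α (k+1) := mul_le_mul_of_nonneg_right h2' hEk1.le
    calc En α k ≤ (u:ℝ) * En α k - (v:ℝ) * En α (k+1) := by linarith
    _ ≤ |(u : ℝ) * En α k - (v : ℝ) * En α (k+1)| := le_abs_self _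
  · -- v = 0
    have hju : (j:ℤ) = u * (qd α k : ℤ) := by rw [hvz, zero_mul, add_zero] at hj'; exact hj'
    have hq' : (1:ℤ) ≤ (qd α k : ℤ) := by exact_mod_cast hqdk
    have hj1' : (1:ℤ) ≤ (j:ℤ) := by exact_mod_cast hj1
    have hupos : 1 ≤ u := by nlinarith [hju, hq', hj1']
    have h1 : (1:ℝ) ≤ (u:ℝ) := by exact_mod_cast hupos
    rw [hvz]
    simp only [Int.cast_zero, zero_mul, sub_zero]
    rw [abs_mul]
    calc En α k = 1 * En α k := (one_mul _).symm
    _ ≤ |(u:ℝ)| * |En α k| := by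
        rw [abs_of_pos hEk]
        apply mul_le_mul_of_nonneg_right _ hEk.le
        calc (1:ℝ) ≤ (u:ℝ) := h1
        _ ≤ |(u:ℝ)| := le_abs_self _
  · -- v ≥ 1 : u ≤ -1
    have hv1 : 1 ≤ v := by omega
    have huneg : u ≤ -1 := by
      by_contra hcon
      push_neg at hcon
      have hu0 : 0 ≤ u := by omega
      have h1 : v * (qd α (k+1) : ℤ) ≥ (qd α (k+1) : ℤ) := by nlinarith
      have h2' : 0 ≤ u * (qd α k : ℤ) := mul_nonneg hu0 (by positivity)
      omega
    have h1 : (u:ℝ) ≤ -1 := by exact_mod_cast huneg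
    have h2' : (1:ℝ) ≤ (v:ℝ) := by exact_mod_cast hv1
    rw [abs_sub_comm]
    have t1 : En α (k+1) ≤ (v:ℝ) * En α (k+1) := le_mul_of_one_le_left hEk1.le h2'
    have t2 : (u:ℝ) * En α k ≤ -1 * En α k := mul_le_mul_of_nonneg_right h1 hEk.le
    calc En α k ≤ (v:ℝ) * En α (k+1) - (u:ℝ) * En α k := by linarith
    _ ≤ |(v : ℝ) * En α (k+1) - (u : ℝ) * En α k| := le_abs_self _

include hirr h0 h2 in
lemma fract_bounds (k j : ℕ) (hk : 1 ≤ k) (hj1 : 1 ≤ j) (hj2 : j < qd α k) :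
    En α k < Int.fract ((j : ℝ) * α) ∧ Int.fract ((j : ℝ) * α) < 1 - En α k := by
  obtain ⟨k', rfl⟩ : ∃ k', k = k' + 1 := ⟨k - 1, by omega⟩
  have hb1 := best_approx hirr h0 h2 k' j ⌊(j : ℝ) * α⌋ hj1 hj2
  have hb2 := best_approx hirr h0 h2 k' j (⌊(j : ℝ) * α⌋ + 1) hj1 hj2
  have hstrict := En_strict hirr h0 h2 k'
  have hfr : Int.fract ((j:ℝ) * α) = (j:ℝ) * α - ⌊(j:ℝ)*α⌋ := rfl
  have hnn := Int.fract_nonneg ((j:ℝ) * α)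
  have hlt := Int.fract_lt_one ((j:ℝ) * α)
  constructor
  · have : |(j : ℝ) * α - (⌊(j : ℝ) * α⌋ : ℝ)| = Int.fract ((j:ℝ) * α) := by
      rw [hfr]; exact abs_of_nonneg hnn
    rw [this] at hb1
    linarith
  · have hle : (j:ℝ) * α - ((⌊(j:ℝ)*α⌋ : ℝ) + 1) = Int.fract ((j:ℝ)*α) - 1 := by
      rw [hfr]; ring
    have : |(j : ℝ) * α - ((⌊(j : ℝ) * α⌋ + 1 : ℤ) : ℝ)| = 1 - Int.fract ((j:ℝ) * α) := by
      push_cast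
      rw [hle, abs_of_nonpos (by linarith)]
      ring
    rw [this] at hb2
    linarith

include hirr h0 h2 in
lemma fract_qd_even (k : ℕ) (hk : Even k) :
    Int.fract ((qd α k : ℝ) * α) = En α k := by
  have hsub := qd_alpha_sub (α := α) k
  rw [hk.neg_one_pow, one_mul] at hsub
  have h1 : (qd α k : ℝ) * α = (pn α k : ℝ) + En α k := by linarith
  rw [h1]
  have := En_pos hirr h0 h2 k
  have := En_lt_one hirr h0 h2 k
  rw [show ((pn α k : ℕ) : ℝ) + En α k = En α k + ((pn α k : ℤ) : ℝ) by push_cast; ring]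
  rw [Int.fract_add_intCast]
  exact Int.fract_eq_self.mpr ⟨by linarith, by linarith⟩

include hirr h0 h2 in
lemma fract_qd_odd (k : ℕ) (hk : Odd k) :
    Int.fract ((qd α k : ℝ) * α) = 1 - En α k := by
  have hsub := qd_alpha_sub (α := α) k
  rw [hk.neg_one_pow] at hsub
  have h1 : (qd α k : ℝ) * α = (1 - En α k) + ((pn α k : ℤ) - 1 : ℤ) := by push_cast; linarith
  rw [h1, Int.fract_add_intCast]
  have := En_pos hirr h0 h2 k
  have := En_lt_one hirr h0 h2 k
  exact Int.fract_eq_self.mpr ⟨by linarith, by linarith⟩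

end NT

/-! ### Words -/

noncomputable def letter (α x : ℝ) (j : ℕ) : Bool :=
  if 1 - α ≤ Int.fract (x + (j : ℝ) * α) then true else false

noncomputable def win (α x : ℝ) (m : ℕ) : List Bool := (List.range m).map (letter α x)

/-- The "singular phase" region of length `E α k`. -/
def Bad (α : ℝ) (k : ℕ) (x : ℝ) : Prop :=
  if Even k then 1 - En α k ≤ Int.fract x else Int.fract x < En α k

section Words

variable {α : ℝ} (hirr : Irrational α) (h0 : 0 < α) (h2 : α < 1 / 2)

@[simp] lemma win_length (x : ℝ) (m : ℕ) : (win α x m).length = m := by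
  simp [win]

lemma letter_shift (x : ℝ) (i j : ℕ) : letter α x (i + j) = letter α (x + (i:ℝ)*α) j := by
  have h : x + ((i + j : ℕ) : ℝ) * α = (x + (i:ℝ)*α) + (j:ℝ)*α := by push_cast; ring
  rw [letter, letter, h]

lemma floor_step (h0 : 0 < α) (h1 : α < 1) (y : ℝ) :
    ⌊y + α⌋ = ⌊y⌋ + (if 1 - α ≤ Int.fract y then 1 else 0) := by
  have hy := Int.fract_nonneg y
  have hy2 := Int.fract_lt_one y
  have hfr : Int.fract y = y - ⌊y⌋ := rfl
  rw [hfr] at hy hy2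
  split_ifs with h
  · rw [hfr] at h
    refine Int.floor_eq_iff.mpr ⟨?_, ?_⟩ <;> push_cast <;> linarith
  · rw [hfr] at h; push_neg at h
    refine Int.floor_eq_iff.mpr ⟨?_, ?_⟩ <;> push_cast <;> linarith

lemma count_win (h0 : 0 < α) (h1 : α < 1) (x : ℝ) :
    ∀ m : ℕ, ((win α x m).count true : ℤ) = ⌊x + (m:ℝ) * α⌋ - ⌊x⌋ := by
  intro m
  induction m with
  | zero => simp [win]
  | succ m ih =>
    have hcast : x + ((m+1:ℕ):ℝ)*α = (x + (m:ℝ)*α) + α := by push_cast; ring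
    have hstep := floor_step h0 h1 (x + (m:ℝ)*α)
    rw [hcast, hstep]
    rw [win, List.range_succ, List.map_append, List.count_append, List.map_singleton]
    push_cast
    rw [show ((List.range m).map (letter α x)).count true = (win α x m).count true from rfl]
    have hsing : (([letter α x m] : List Bool).count true : ℤ)
        = (if 1 - α ≤ Int.fract (x + (m:ℝ)*α) then 1 else 0) := by
      rw [letter]
      split_ifs <;> simp
    push_cast at hsing ⊢
    rw [hsing]
    push_cast at ih
    rw [ih]
    split_ifs <;> push_cast <;> ring

include hirr h0 h2 in
lemma count_eval_even (k : ℕ) (hk : Even k) (x : ℝ) :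
    ((win α x (qd α k)).count true : ℤ)
      = (pn α k : ℤ) + (if Bad α k x then 1 else 0) := by
  rw [count_win h0 (by linarith) x (qd α k)]
  have hsub := qd_alpha_sub (α := α) k
  rw [hk.neg_one_pow, one_mul] at hsub
  have hfrd : Int.fract x = x - ⌊x⌋ := rfl
  have hx : x + (qd α k : ℝ) * α = (Int.fract x + En α k) + ((⌊x⌋ + (pn α k : ℤ) : ℤ) : ℝ) := by
    rw [hfrd]; push_cast; linarith
  rw [hx, Int.floor_add_intCast]
  have hf0 := Int.fract_nonneg x
  have hf1 := Int.fract_lt_one x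
  have hE0 := En_pos hirr h0 h2 k
  have hE1 := En_lt_one hirr h0 h2 k
  rw [Bad, if_pos hk]
  split_ifs with h
  · have h1 : ⌊Int.fract x + En α k⌋ = 1 :=
      Int.floor_eq_iff.mpr ⟨by push_cast; linarith, by push_cast; linarith⟩
    rw [h1]; ring
  · push_neg at h
    have h1 : ⌊Int.fract x + En α k⌋ = 0 :=
      Int.floor_eq_iff.mpr ⟨by push_cast; linarith, by push_cast; linarith⟩
    rw [h1]; ring

include hirr h0 h2 in
lemma count_eval_odd (k : ℕ) (hk : ¬ Even k) (x : ℝ) :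
    ((win α x (qd α k)).count true : ℤ)
      = (pn α k : ℤ) - (if Bad α k x then 1 else 0) := by
  rw [count_win h0 (by linarith) x (qd α k)]
  have hsub := qd_alpha_sub (α := α) k
  rw [(Nat.odd_iff.mpr (Nat.not_even_iff.mp hk)).neg_one_pow] at hsub
  have hfrd : Int.fract x = x - ⌊x⌋ := rfl
  have hx : x + (qd α k : ℝ) * α = (Int.fract x - En α k) + ((⌊x⌋ + (pn α k : ℤ) : ℤ) : ℝ) := by
    rw [hfrd]; push_cast; linarith
  rw [hx, Int.floor_add_intCast]
  have hf0 := Int.fract_nonneg x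
  have hf1 := Int.fract_lt_one x
  have hE0 := En_pos hirr h0 h2 k
  have hE1 := En_lt_one hirr h0 h2 k
  rw [Bad, if_neg hk]
  split_ifs with h
  · have h1 : ⌊Int.fract x - En α k⌋ = -1 :=
      Int.floor_eq_iff.mpr ⟨by push_cast; linarith, by push_cast; linarith⟩
    rw [h1]; ring
  · push_neg at h
    have h1 : ⌊Int.fract x - En α k⌋ = 0 :=
      Int.floor_eq_iff.mpr ⟨by push_cast; linarith, by push_cast; linarith⟩
    rw [h1]; ring

lemma fract_addl (A t : ℝ) : Int.fract (A + t) = Int.fract (Int.fract A + t) := by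
  have h : A + t = (Int.fract A + t) + ((⌊A⌋ : ℤ) : ℝ) := by
    have h2 : Int.fract A = A - ⌊A⌋ := rfl
    rw [h2]; push_cast; ring
  rw [h, Int.fract_add_intCast]

end Words

section ClaimA

variable {α : ℝ} (hirr : Irrational α) (h0 : 0 < α) (h2 : α < 1 / 2)

include hirr h0 h2 in
lemma F_even (k : ℕ) (hk1 : 1 ≤ k) (hk : Even k) (j : ℕ) (hj : j < qd α k) :
    Int.fract ((j:ℝ)*α - En α k) ≤ 1 - En α k ∧
      (Int.fract ((j:ℝ)*α - En α k) ≤ 1 - α - En α k ∨ 1 - α ≤ Int.fract ((j:ℝ)*α - En α k)) := by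
  set ε := En α k with hεdef
  have hε0 := En_pos hirr h0 h2 k
  have hε1 := En_lt_one hirr h0 h2 k
  have hεα := En_lt_alpha hirr h0 h2 k hk1
  rcases Nat.eq_zero_or_pos j with rfl | hj1
  · have hc : Int.fract ((0:ℕ)*α - ε) = 1 - ε := by
      push_cast
      rw [zero_mul, zero_sub, show -ε = (1 - ε) + ((-1 : ℤ) : ℝ) by push_cast; ring,
        Int.fract_add_intCast]
      exact Int.fract_eq_self.mpr ⟨by linarith, by linarith⟩
    rw [hc]
    exact ⟨le_refl _, Or.inr (by linarith)⟩
  · obtain ⟨hf1, hf2⟩ := fract_bounds hirr h0 h2 k j hk1 hj1 hj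
    set f := Int.fract ((j:ℝ)*α) with hfdef
    have hf0 : 0 ≤ f := Int.fract_nonneg _
    have hflt : f < 1 := Int.fract_lt_one _
    have hc : Int.fract ((j:ℝ)*α - ε) = f - ε := by
      rw [sub_eq_add_neg, fract_addl, ← hfdef, ← sub_eq_add_neg]
      exact Int.fract_eq_self.mpr ⟨by linarith, by linarith⟩
    rw [hc]
    constructor
    · linarith
    · -- F2
      by_contra hcon
      push_neg at hcon
      obtain ⟨ha1, ha2⟩ := hcon
      have h1a : 1 - α < f := by linarith
      have h2a : f < 1 - α + ε := by linarith
      have hnext : Int.fract (((j+1:ℕ):ℝ) * α) = f + α - 1 := by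
        have hcast : ((j+1:ℕ):ℝ) * α = (j:ℝ)*α + α := by push_cast; ring
        rw [hcast, fract_addl, ← hfdef]
        have hfl : ⌊f + α⌋ = 1 :=
          Int.floor_eq_iff.mpr ⟨by push_cast; linarith, by push_cast; linarith⟩
        have hdef : Int.fract (f + α) = f + α - ((⌊f + α⌋ : ℤ) : ℝ) := rfl
        rw [hdef, hfl]
        norm_num
      rcases lt_or_ge (j+1) (qd α k) with hlt | hge
      · obtain ⟨hb1, _⟩ := fract_bounds hirr h0 h2 k (j+1) hk1 (by omega) hlt
        rw [hnext] at hb1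
        linarith
      · have hjn : j + 1 = qd α k := by omega
        have := fract_qd_even hirr h0 h2 k hk
        rw [← hjn] at this
        rw [hnext] at this
        linarith

include hirr h0 h2 in
lemma F_odd (k : ℕ) (hk1 : 1 ≤ k) (hk : ¬ Even k) (j : ℕ) (hj : j < qd α k) :
    Int.fract ((j:ℝ)*α) ≤ 1 - En α k ∧
      (Int.fract ((j:ℝ)*α) ≤ 1 - α - En α k ∨ 1 - α ≤ Int.fract ((j:ℝ)*α)) := by
  set ε := En α k with hεdef
  have hε0 := En_pos hirr h0 h2 k
  have hε1 := En_lt_one hirr h0 h2 k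
  have hεα := En_lt_alpha hirr h0 h2 k hk1
  rcases Nat.eq_zero_or_pos j with rfl | hj1
  · have hc : Int.fract ((0:ℕ)*α) = 0 := by push_cast; simp
    rw [hc]
    exact ⟨by linarith, Or.inl (by linarith)⟩
  · obtain ⟨hf1, hf2⟩ := fract_bounds hirr h0 h2 k j hk1 hj1 hj
    set f := Int.fract ((j:ℝ)*α) with hfdef
    have hf0 : 0 ≤ f := Int.fract_nonneg _
    have hflt : f < 1 := Int.fract_lt_one _
    refine ⟨by linarith, ?_⟩
    by_contra hcon
    push_neg at hcon
    obtain ⟨ha1, ha2⟩ := hcon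
    have hnext : Int.fract (((j+1:ℕ):ℝ) * α) = f + α := by
      have hcast : ((j+1:ℕ):ℝ) * α = (j:ℝ)*α + α := by push_cast; ring
      rw [hcast, fract_addl, ← hfdef]
      exact Int.fract_eq_self.mpr ⟨by linarith, by linarith⟩
    have hrange : 1 - ε < f + α := by linarith
    rcases lt_or_ge (j+1) (qd α k) with hlt | hge
    · obtain ⟨_, hb2⟩ := fract_bounds hirr h0 h2 k (j+1) hk1 (by omega) hlt
      rw [hnext] at hb2
      linarith
    · have hjn : j + 1 = qd α k := by omega
      have := fract_qd_odd hirr h0 h2 k (Nat.odd_iff.mpr (Nat.not_even_iff.mp hk))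
      rw [← hjn] at this
      rw [hnext] at this
      linarith

include hirr h0 h2 in
lemma win_eq_of_bad (k : ℕ) (hk1 : 1 ≤ k) (x y : ℝ)
    (hx : Bad α k x) (hy : Bad α k y) : win α x (qd α k) = win α y (qd α k) := by
  set ε := En α k with hεdef
  have hε0 := En_pos hirr h0 h2 k
  have hε1 := En_lt_one hirr h0 h2 k
  have hεα := En_lt_alpha hirr h0 h2 k hk1
  unfold win
  apply List.map_congr_left
  intro j hj
  rw [List.mem_range] at hj
  by_cases hk : Even k
  · -- even case
    rw [Bad, if_pos hk] at hx hy
    obtain ⟨hF1, hF2⟩ := F_even hirr h0 h2 k hk1 hk j hj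
    set c := Int.fract ((j:ℝ)*α - ε) with hcdef
    have hc0 : 0 ≤ c := Int.fract_nonneg _
    have key : ∀ z : ℝ, 1 - ε ≤ Int.fract z →
        Int.fract (z + (j:ℝ)*α) = c + (Int.fract z - (1 - ε)) := by
      intro z hz
      have hz1 := Int.fract_lt_one z
      rw [fract_addl,
        show Int.fract z + (j:ℝ)*α
          = ((j:ℝ)*α - ε) + (Int.fract z - (1 - ε)) + ((1:ℤ):ℝ) by push_cast; ring,
        Int.fract_add_intCast, fract_addl, ← hcdef]
      exact Int.fract_eq_self.mpr ⟨by linarith, by linarith⟩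
    rw [letter, letter, key x hx, key y hy]
    have hx1 := Int.fract_lt_one x
    have hy1 := Int.fract_lt_one y
    rcases hF2 with h | h
    · rw [if_neg (by push_neg; linarith), if_neg (by push_neg; linarith)]
    · rw [if_pos (by linarith), if_pos (by linarith)]
  · -- odd case
    rw [Bad, if_neg hk] at hx hy
    obtain ⟨hF1, hF2⟩ := F_odd hirr h0 h2 k hk1 hk j hj
    set c := Int.fract ((j:ℝ)*α) with hcdef
    have hc0 : 0 ≤ c := Int.fract_nonneg _
    have key : ∀ z : ℝ, Int.fract z < ε →
        Int.fract (z + (j:ℝ)*α) = c + Int.fract z := by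
      intro z hz
      have hz0 := Int.fract_nonneg z
      rw [fract_addl, add_comm (Int.fract z), fract_addl, ← hcdef]
      exact Int.fract_eq_self.mpr ⟨by linarith, by linarith⟩
    rw [letter, letter, key x hx, key y hy]
    have hx0 := Int.fract_nonneg x
    have hy0 := Int.fract_nonneg y
    rcases hF2 with h | h
    · rw [if_neg (by push_neg; linarith), if_neg (by push_neg; linarith)]
    · rw [if_pos (by linarith), if_pos (by linarith)]

end ClaimA

section Repr

variable {α : ℝ} (hirr : Irrational α) (h0 : 0 < α) (h2 : α < 1 / 2)

lemma lower_letter (ρ : ℝ) (m : ℕ) : lowerWord α ρ m = letter α ρ m := rfl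

lemma fract'_pos (y : ℝ) : 0 < fract' y := by
  have := Int.fract_lt_one (-y); rw [fract']; linarith

lemma fract'_le_one (y : ℝ) : fract' y ≤ 1 := by
  have := Int.fract_nonneg (-y); rw [fract']; linarith

lemma upper_eq_letter (h1 : α < 1) (ρ : ℝ) (N : ℕ) :
    ∃ δ : ℝ, 0 < δ ∧ ∀ m < N, upperWord α ρ m = letter α (ρ - δ) m := by
  classical
  set g : ℕ → ℝ := fun m =>
    if 1 - α < fract' (ρ + (m:ℝ)*α) then fract' (ρ + (m:ℝ)*α) - (1-α)
    else fract' (ρ + (m:ℝ)*α) with hg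
  have hgdef : ∀ m : ℕ, g m =
      if 1 - α < fract' (ρ + (m:ℝ)*α) then fract' (ρ + (m:ℝ)*α) - (1-α)
      else fract' (ρ + (m:ℝ)*α) := fun m => rfl
  have hgpos : ∀ m, 0 < g m := by
    intro m
    rw [hgdef]
    split_ifs with h
    · linarith
    · exact fract'_pos _
  have hne : (Finset.range (N+1)).Nonempty := ⟨0, by simp⟩
  set I := (Finset.range (N+1)).inf' hne g with hI
  have hIpos : 0 < I := by
    obtain ⟨i, hi, hieq⟩ := Finset.exists_mem_eq_inf' hne g
    rw [hI, hieq]; exact hgpos i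
  refine ⟨I / 2, by linarith, ?_⟩
  intro m hm
  have hIle : I ≤ g m := Finset.inf'_le g (by simp; omega)
  have hδlt : I / 2 < g m := by linarith
  have hδpos : 0 < I / 2 := by linarith
  set y := ρ + (m:ℝ)*α with hy
  have hgle : g m ≤ fract' y := by
    rw [hgdef, ← hy]
    split_ifs with h
    · linarith
    · exact le_refl _
  have hf'0 := fract'_pos y
  have hf'1 := fract'_le_one y
  have hyfr : Int.fract (ρ - I/2 + (m:ℝ)*α) = fract' y - I/2 := by
    have hsplit : ρ - I/2 + (m:ℝ)*α = (fract' y - I/2) + ((-1 - ⌊-y⌋ : ℤ) : ℝ) := by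
      have hfr : Int.fract (-y) = -y - ⌊-y⌋ := rfl
      rw [fract', hfr]
      push_cast
      rw [hy]
      ring
    rw [hsplit, Int.fract_add_intCast]
    refine Int.fract_eq_self.mpr ⟨by linarith, by linarith⟩
  rw [upperWord, letter, ← hy, hyfr]
  by_cases h : 1 - α < fract' y
  · have hgm : g m = fract' y - (1 - α) := by rw [hgdef, ← hy, if_pos h]
    have hcond : 1 - α ≤ fract' y - I/2 := by rw [hgm] at hδlt; linarith
    rw [if_pos h, if_pos hcond]
  · have hcond : ¬ (1 - α ≤ fract' y - I/2) := by
      push_neg at h ⊢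
      linarith
    rw [if_neg h, if_neg hcond]

lemma factor_repr {w : List Bool} (h1 : α < 1) (hw : IsFactor α w) :
    ∃ x : ℝ, w = (List.range w.length).map (letter α x) := by
  obtain ⟨S, ⟨ρ, hρ0, hρ1, hS⟩, i, hwi⟩ := hw
  rcases hS with rfl | rfl
  · refine ⟨ρ + (i:ℝ)*α, ?_⟩
    conv_lhs => rw [hwi]
    apply List.map_congr_left
    intro j hj
    rw [lower_letter, letter_shift]
  · obtain ⟨δ, hδ, hup⟩ := upper_eq_letter h1 ρ (i + w.length)
    refine ⟨ρ - δ + (i:ℝ)*α, ?_⟩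
    conv_lhs => rw [hwi]
    apply List.map_congr_left
    intro j hj
    rw [List.mem_range] at hj
    rw [← letter_shift, ← hup (i + j) (by omega)]

lemma seg_repr {w : List Bool} {x : ℝ} (hrepr : w = (List.range w.length).map (letter α x))
    (i l : ℕ) (hil : i + l ≤ w.length) :
    (w.drop i).take l = win α (x + (i:ℝ)*α) l := by
  apply List.ext_getElem
  · simp only [List.length_take, List.length_drop, win_length]
    omega
  · intro j h1 h2
    simp only [List.getElem_take, List.getElem_drop]
    rw [List.getElem_of_eq hrepr]
    simp only [win, List.getElem_map, List.getElem_range]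
    exact letter_shift x i j

lemma seg_count {w : List Bool} {x : ℝ} (h0 : 0 < α) (h1 : α < 1)
    (hrepr : w = (List.range w.length).map (letter α x))
    (i l : ℕ) (hil : i + l ≤ w.length) :
    ((((w.drop i).take l).count true : ℤ)) = ⌊x + (i:ℝ)*α + (l:ℝ)*α⌋ - ⌊x + (i:ℝ)*α⌋ := by
  rw [seg_repr hrepr i l hil, count_win h0 h1]

end Repr

section Ident

variable {α : ℝ} (hirr : Irrational α) (h0 : 0 < α) (h2 : α < 1 / 2)

include hirr h0 h2 in
lemma count_notbad (k : ℕ) (z : ℝ) (hz : ¬ Bad α k z) :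
    (win α z (qd α k)).count true = pn α k := by
  by_cases hk : Even k
  · have := count_eval_even hirr h0 h2 k hk z
    rw [if_neg hz, add_zero] at this
    exact_mod_cast this
  · have := count_eval_odd hirr h0 h2 k hk z
    rw [if_neg hz, sub_zero] at this
    exact_mod_cast this

include hirr h0 h2 in
lemma count_bad (k : ℕ) (z : ℝ) (hz : Bad α k z) :
    ((win α z (qd α k)).count true : ℤ) = (pn α k : ℤ) + (if Even k then 1 else -1) := by
  by_cases hk : Even k
  · have := count_eval_even hirr h0 h2 k hk z
    rw [if_pos hz] at this
    rw [this, if_pos hk]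
  · have := count_eval_odd hirr h0 h2 k hk z
    rw [if_pos hz] at this
    rw [this, if_neg hk]
    ring

lemma win_is_factor (z : ℝ) (hz0 : 0 ≤ z) (hz1 : z < 1) (m : ℕ) :
    IsFactor α (win α z m) := by
  refine ⟨lowerWord α z, ⟨z, hz0, hz1, Or.inl rfl⟩, 0, ?_⟩
  rw [win_length]
  apply List.map_congr_left
  intro j hj
  rw [show (0 : ℕ) + j = j by omega]
  rfl

include hirr h0 h2 in
lemma singular_eq_win (k : ℕ) (hk1 : 1 ≤ k) (s : List Bool) (hs : IsSingular α k s) :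
    ∀ x : ℝ, Bad α k x → s = win α x (qd α k) := by
  obtain ⟨hsf, hslen, huniq⟩ := hs
  obtain ⟨xs, hxs⟩ := factor_repr (by linarith : α < 1) hsf
  rw [hslen] at hxs
  have hwin : s = win α xs (qd α k) := hxs
  by_cases hbad : Bad α k xs
  · intro x hx
    rw [hwin]
    exact win_eq_of_bad hirr h0 h2 k hk1 xs x hbad hx
  · exfalso
    have hε0 := En_pos hirr h0 h2 k
    have hε1 := En_lt_one hirr h0 h2 k
    have hεα := En_lt_alpha hirr h0 h2 k hk1
    have hn1 : 1 ≤ qd α k := qd_pos hirr h0 h2 k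
    have hfr1 : Int.fract (1 - α) = 1 - α := Int.fract_eq_self.mpr ⟨by linarith, by linarith⟩
    have hfr2 : Int.fract (En α k) = En α k := Int.fract_eq_self.mpr ⟨by linarith, by linarith⟩
    have hnb1 : ¬ Bad α k (1 - α) := by
      rw [Bad]
      split_ifs with hk'
      · rw [hfr1, not_le]; linarith
      · rw [hfr1, not_lt]; linarith
    have hnb2 : ¬ Bad α k (En α k) := by
      rw [Bad]
      split_ifs with hk'
      · rw [hfr2, not_le]; linarith
      · rw [hfr2]; exact lt_irrefl _
    have hl0 : ∀ z : ℝ, letter α z 0 = (if 1 - α ≤ Int.fract z then true else false) := by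
      intro z; rw [letter]; norm_num
    have hl1 : letter α (1 - α) 0 = true := by
      rw [hl0, hfr1, if_pos (le_refl _)]
    have hl2 : letter α (En α k) 0 = false := by
      rw [hl0, hfr2, if_neg (by rw [not_le]; linarith)]
    have hlt0 : 0 < (win α (1 - α) (qd α k)).length := by rw [win_length]; omega
    have hlt0' : 0 < (win α (En α k) (qd α k)).length := by rw [win_length]; omega
    have e1 : (win α (1 - α) (qd α k))[0]'hlt0 = letter α (1 - α) 0 := by
      simp [win]
    have e2 : (win α (En α k) (qd α k))[0]'hlt0' = letter α (En α k) 0 := by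
      simp [win]
    have hneq : win α (1 - α) (qd α k) ≠ win α (En α k) (qd α k) := by
      intro hcon
      have e3 := List.getElem_of_eq hcon hlt0
      simp only [e1, e2] at e3
      rw [hl1, hl2] at e3
      exact Bool.noConfusion e3
    have hfac1 : IsFactor α (win α (1 - α) (qd α k)) :=
      win_is_factor (1 - α) (by linarith) (by linarith) (qd α k)
    have hfac2 : IsFactor α (win α (En α k) (qd α k)) :=
      win_is_factor (En α k) hε0.le (by linarith) (qd α k)
    have hcs : s.count true = pn α k := by
      rw [hwin]; exact count_notbad hirr h0 h2 k xs hbad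
    rcases eq_or_ne (win α (1 - α) (qd α k)) s with heq | hne'
    · have hvne : win α (En α k) (qd α k) ≠ s := by
        intro hc
        exact hneq (heq.trans hc.symm)
      exact huniq (win α (En α k) (qd α k)) hfac2 (by rw [win_length]) hvne
        ⟨by rw [win_length, hslen], by
          rw [count_notbad hirr h0 h2 k (En α k) hnb2, hcs]⟩
    · exact huniq (win α (1 - α) (qd α k)) hfac1 (by rw [win_length]) hne'
        ⟨by rw [win_length, hslen], by
          rw [count_notbad hirr h0 h2 k (1 - α) hnb1, hcs]⟩

end Ident

section Builders

lemma flatten_length_const (n : ℕ) :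
    ∀ bs : List (List Bool), (∀ b ∈ bs, b.length = n) → bs.flatten.length = bs.length * n := by
  intro bs
  induction bs with
  | nil => simp
  | cons b bs ih =>
    intro h
    rw [List.flatten_cons, List.length_append, ih (fun x hx => h x (by simp [hx])),
      h b (by simp), List.length_cons]
    ring

lemma flatten_block (n : ℕ) :
    ∀ bs : List (List Bool), (∀ b ∈ bs, b.length = n) → ∀ i, (hi : i < bs.length) →
      (bs.flatten.drop (i * n)).take n = bs[i] := by
  intro bs
  induction bs with
  | nil => intro _ i hi; simp at hi
  | cons b bs ih =>
    intro h i hi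
    rcases Nat.eq_zero_or_pos i with rfl | hpos
    · rw [List.flatten_cons]
      simp only [Nat.zero_mul, List.drop_zero]
      rw [List.take_left' (h b (by simp))]
      rfl
    · obtain ⟨i', rfl⟩ : ∃ i', i = i' + 1 := ⟨i - 1, by omega⟩
      rw [List.flatten_cons]
      have hb : b.length = n := h b (by simp)
      have hdrop : ((b ++ bs.flatten).drop ((i' + 1) * n)) = bs.flatten.drop (i' * n) := by
        rw [show (i' + 1) * n = b.length + i' * n by rw [hb]; ring, List.drop_append]; simp
      rw [hdrop, ih (fun x hx => h x (by simp [hx])) i' (by simpa using hi)]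
      simp

lemma hasAbPeriod_of_blocks (n : ℕ) (hn : 1 ≤ n) (c : ℕ) (w : List Bool)
    (bs : List (List Bool)) (hb2 : 2 ≤ bs.length)
    (hlen : ∀ b ∈ bs, b.length = n) (hcnt : ∀ b ∈ bs, b.count true = c)
    (hinf : w <:+: bs.flatten) : HasAbPeriod w n := by
  refine ⟨bs.length, bs.flatten, ⟨hn, hb2, flatten_length_const n bs hlen, ?_⟩, hinf⟩
  intro i hi j hj
  rw [flatten_block n bs hlen i hi, flatten_block n bs hlen j hj]
  refine ⟨?_, ?_⟩
  · rw [hlen _ (bs.getElem_mem hi), hlen _ (bs.getElem_mem hj)]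
  · rw [hcnt _ (bs.getElem_mem hi), hcnt _ (bs.getElem_mem hj)]

lemma hasAbPeriod_of_short (n : ℕ) (hn : 1 ≤ n) (w : List Bool) (hL : w.length ≤ n) :
    HasAbPeriod w n := by
  set c := w.count true with hc
  have hcle : c ≤ n := le_trans (List.count_le_length (a := true) (l := w)) hL
  refine hasAbPeriod_of_blocks n hn c w
    [w ++ List.replicate (n - w.length) false,
     List.replicate c true ++ List.replicate (n - c) false] (by simp) ?_ ?_ ?_
  · intro b hb
    simp only [List.mem_cons, List.not_mem_nil, or_false] at hb
    rcases hb with rfl | rfl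
    · simp only [List.length_append, List.length_replicate]; omega
    · simp only [List.length_append, List.length_replicate]; omega
  · intro b hb
    simp only [List.mem_cons, List.not_mem_nil, or_false] at hb
    rcases hb with rfl | rfl
    · simp [List.count_append, List.count_replicate, hc]
    · simp [List.count_append, List.count_replicate]
  · apply List.IsPrefix.isInfix
    refine ⟨List.replicate (n - w.length) false ++
      (List.replicate c true ++ List.replicate (n - c) false), ?_⟩
    simp [List.append_assoc]

lemma mid_flatten (w : List Bool) (r n : ℕ) :
    ∀ M : ℕ, ((List.range M).map (fun m => (w.drop (r + m*n)).take n)).flatten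
      = (w.drop r).take (M*n) := by
  intro M
  induction M with
  | zero => simp
  | succ M ih =>
    rw [List.range_succ, List.map_append, List.flatten_append, ih]
    simp only [List.map_singleton, List.flatten_cons, List.flatten_nil, List.append_nil]
    rw [show (M+1)*n = M*n + n by ring, List.take_add]
    congr 1
    rw [List.drop_drop]

end Builders

section Avoid

variable {α : ℝ} (hirr : Irrational α) (h0 : 0 < α) (h2 : α < 1 / 2)

include hirr h0 h2 in
lemma p_alpha_bounds (k : ℕ) (hk1 : 1 ≤ k) :
    (qd α k : ℝ) * α - α < (pn α k : ℝ) ∧ (pn α k : ℝ) < (qd α k : ℝ) * α + α := by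
  have hsub := qd_alpha_sub (α := α) k
  have hε0 := En_pos hirr h0 h2 k
  have hεα := En_lt_alpha hirr h0 h2 k hk1
  rcases Nat.even_or_odd k with hk | hk
  · rw [hk.neg_one_pow, one_mul] at hsub
    constructor <;> linarith
  · rw [hk.neg_one_pow, neg_one_mul] at hsub
    constructor <;> linarith

include hirr h0 h2 in
lemma pn_le_qd (k : ℕ) (hk1 : 1 ≤ k) : pn α k ≤ qd α k := by
  obtain ⟨_, hb⟩ := p_alpha_bounds hirr h0 h2 k hk1
  have hq1 : (1 : ℝ) ≤ (qd α k : ℝ) := by exact_mod_cast qd_pos hirr h0 h2 k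
  have : (pn α k : ℝ) < (qd α k : ℝ) + 1 := by nlinarith
  exact_mod_cast Nat.lt_succ_iff.mp (by exact_mod_cast this)

include hirr h0 h2 in
lemma partial_bounds (k : ℕ) (hk1 : 1 ≤ k) (y : ℝ) (r : ℕ) (hr : r < qd α k) :
    ⌊y + (r:ℝ)*α⌋ - ⌊y⌋ ≤ (pn α k : ℤ) ∧
      (pn α k : ℤ) - (⌊y + (r:ℝ)*α⌋ - ⌊y⌋) ≤ (qd α k : ℤ) - (r : ℤ) := by
  obtain ⟨hp1, hp2⟩ := p_alpha_bounds hirr h0 h2 k hk1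
  set c : ℤ := ⌊y + (r:ℝ)*α⌋ - ⌊y⌋ with hcdef
  have hf1 : (⌊y + (r:ℝ)*α⌋ : ℝ) ≤ y + (r:ℝ)*α := Int.floor_le _
  have hf2 : y + (r:ℝ)*α < ⌊y + (r:ℝ)*α⌋ + 1 := Int.lt_floor_add_one _
  have hf3 : (⌊y⌋ : ℝ) ≤ y := Int.floor_le _
  have hf4 : y < ⌊y⌋ + 1 := Int.lt_floor_add_one _
  have hcub : (c : ℝ) < (r:ℝ)*α + 1 := by rw [hcdef]; push_cast; linarith
  have hclb : (r:ℝ)*α - 1 < (c : ℝ) := by rw [hcdef]; push_cast; linarith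
  have hrn : (r : ℝ) ≤ (qd α k : ℝ) - 1 := by
    have : (r : ℝ) + 1 ≤ (qd α k : ℝ) := by exact_mod_cast hr
    linarith
  constructor
  · have : (c : ℝ) < (pn α k : ℝ) + 1 := by nlinarith
    exact_mod_cast Int.lt_add_one_iff.mp (by exact_mod_cast this)
  · have hnr1 : (1:ℝ) ≤ (qd α k : ℝ) - r := by linarith
    have : (pn α k : ℝ) - (c : ℝ) < ((qd α k : ℝ) - r) + 1 := by nlinarith
    have h' : (pn α k : ℤ) - c < ((qd α k : ℤ) - r) + 1 := by exact_mod_cast this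
    omega

include hirr h0 h2 in
lemma pn_le_qd' (k : ℕ) (hk1 : 1 ≤ k) : pn α k ≤ qd α k := pn_le_qd hirr h0 h2 k hk1

include hirr h0 h2 in
lemma hasAbPeriod_avoid (k : ℕ) (hk1 : 1 ≤ k) (w : List Bool) {x : ℝ}
    (hrepr : w = (List.range w.length).map (letter α x))
    (hnL : qd α k ≤ w.length) (r : ℕ) (hr : r < qd α k)
    (havoid : ∀ i, i + qd α k ≤ w.length → i % qd α k = r → ¬ Bad α k (x + (i:ℝ)*α)) :
    HasAbPeriod w (qd α k) := by
  classical
  set n := qd α k with hn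
  set L := w.length with hLdef
  set p := pn α k with hp
  set M := (L - r) / n with hM
  set l := (L - r) % n with hl
  have hn1 : 1 ≤ n := qd_pos hirr h0 h2 k
  have h1 : α < 1 := by linarith
  have hrL : r ≤ L := by omega
  have hdm : M * n + l = L - r := by
    rw [hM, hl, Nat.mul_comm]
    exact Nat.div_add_mod _ _
  have hln : l < n := Nat.mod_lt _ (by omega)
  have hpn : p ≤ n := pn_le_qd hirr h0 h2 k hk1
  -- prefix partial block
  set c₀ := (w.take r).count true with hc0def
  have hc0 : (c₀ : ℤ) = ⌊x + (r:ℝ)*α⌋ - ⌊x⌋ := by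
    have hseg := seg_count (x := x) h0 h1 hrepr 0 r (by omega)
    simp only [List.drop_zero, Nat.cast_zero, zero_mul, add_zero] at hseg
    rw [hc0def]
    exact_mod_cast hseg
  obtain ⟨hb1, hb2⟩ := partial_bounds hirr h0 h2 k hk1 x r hr
  rw [← hc0] at hb1 hb2
  have hc0p : c₀ ≤ p := by exact_mod_cast hb1
  have hdlt : p - c₀ ≤ n - r := by omega
  -- suffix partial block
  set i₁ := r + M * n with hi1
  set c₁ := ((w.drop i₁).take l).count true with hc1def
  have hc1 : (c₁ : ℤ) = ⌊(x + (i₁:ℝ)*α) + (l:ℝ)*α⌋ - ⌊(x + (i₁:ℝ)*α)⌋ := by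
    have hseg := seg_count (x := x) h0 h1 hrepr i₁ l (by omega)
    rw [hc1def]
    exact_mod_cast hseg
  obtain ⟨hb1', hb2'⟩ := partial_bounds hirr h0 h2 k hk1 (x + (i₁:ℝ)*α) l hln
  rw [← hc1] at hb1' hb2'
  have hc1p : c₁ ≤ p := by exact_mod_cast hb1'
  have hdlt' : p - c₁ ≤ n - l := by omega
  -- blocks
  set A := List.replicate ((n - r) - (p - c₀)) false ++ List.replicate (p - c₀) true with hA
  set B := List.replicate (p - c₁) true ++ List.replicate ((n - l) - (p - c₁)) false with hB
  set X := List.replicate p true ++ List.replicate (n - p) false with hX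
  set middles := (List.range M).map (fun m => (w.drop (r + m*n)).take n) with hmid
  set bs := (A ++ w.take r) :: (middles ++ [(w.drop i₁) ++ B, X]) with hbs
  have hmmul : ∀ m : ℕ, m < M → r + m * n + n ≤ L := by
    intro m hm
    have h' : m + 1 ≤ M := hm
    have h'' : (m + 1) * n ≤ M * n := Nat.mul_le_mul_right n h'
    have hmn : m * n + n ≤ M * n := by
      calc m * n + n = (m + 1) * n := by ring
      _ ≤ M * n := h''
    omega
  have hmem : ∀ b ∈ bs, b = A ++ w.take r ∨ (∃ m, m < M ∧ b = (w.drop (r + m*n)).take n)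
      ∨ b = (w.drop i₁) ++ B ∨ b = X := by
    intro b hb
    rw [hbs] at hb
    rcases List.mem_cons.mp hb with h | h
    · exact Or.inl h
    rcases List.mem_append.mp h with h | h
    · rw [hmid] at h
      obtain ⟨m, hm, hbm⟩ := List.mem_map.mp h
      exact Or.inr (Or.inl ⟨m, List.mem_range.mp hm, hbm.symm⟩)
    · rcases List.mem_cons.mp h with h | h
      · exact Or.inr (Or.inr (Or.inl h))
      · rcases List.mem_cons.mp h with h | h
        · exact Or.inr (Or.inr (Or.inr h))
        · simp at h
  refine hasAbPeriod_of_blocks n hn1 p w bs (by rw [hbs]; simp) ?_ ?_ ?_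
  · -- lengths
    intro b hb
    rcases hmem b hb with rfl | ⟨m, hm, rfl⟩ | rfl | rfl
    · rw [hA]
      simp only [List.length_append, List.length_replicate, List.length_take]
      omega
    · simp only [List.length_take, List.length_drop]
      have := hmmul m hm
      omega
    · rw [hB]
      simp only [List.length_append, List.length_replicate, List.length_drop]
      omega
    · rw [hX]
      simp only [List.length_append, List.length_replicate]
      omega
  · -- counts
    intro b hb
    rcases hmem b hb with rfl | ⟨m, hm, rfl⟩ | rfl | rfl
    · rw [List.count_append, hA, List.count_append]
      simp only [List.count_replicate]
      norm_num
      try omega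
    · have hmn := hmmul m hm
      rw [seg_repr hrepr (r + m*n) n (by omega)]
      apply count_notbad hirr h0 h2
      apply havoid
      · omega
      · rw [Nat.add_mul_mod_self_right, Nat.mod_eq_of_lt hr]
    · have hS3 : (w.drop i₁).count true = c₁ := by
        rw [hc1def]
        congr 1
        rw [List.take_of_length_le]
        simp only [List.length_drop]
        omega
      rw [List.count_append, hS3, hB, List.count_append]
      simp only [List.count_replicate]
      norm_num
      try omega
    · rw [hX, List.count_append]
      simp only [List.count_replicate]
      norm_num
      try omega
  · -- infix
    have hflat : bs.flatten = A ++ (w ++ (B ++ X)) := by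
      rw [hbs, List.flatten_cons, List.flatten_append]
      simp only [List.flatten_cons, List.flatten_nil, List.append_nil]
      rw [hmid, mid_flatten]
      have hrec : w.take r ++ ((w.drop r).take (M*n) ++ w.drop i₁) = w := by
        have hdd : (w.drop r).drop (M*n) = w.drop i₁ := by
          rw [List.drop_drop]
        rw [← hdd, List.take_append_drop, List.take_append_drop]
      calc (A ++ w.take r) ++ ((w.drop r).take (M*n) ++ ((w.drop i₁ ++ B) ++ X))
          = A ++ (w.take r ++ ((w.drop r).take (M*n) ++ w.drop i₁) ++ (B ++ X)) := by
            simp [List.append_assoc]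
      _ = A ++ (w ++ (B ++ X)) := by rw [hrec]
    rw [hflat]
    exact ⟨A, B ++ X, by simp [List.append_assoc]⟩

end Avoid


lemma flatten_replicate_singleton (c : Bool) :
    ∀ m : ℕ, (List.replicate m [c]).flatten = List.replicate m c := by
  intro m
  induction m with
  | zero => simp
  | succ m ih => simp [List.replicate_succ, ih]

theorem many_singular_occurrences
    (α : ℝ) (hirr : Irrational α) (h0 : 0 < α) (h2 : α < 1 / 2)
    (k : ℕ) (s : List Bool) (hs : IsSingular α k s)
    (w : List Bool) (hw : IsFactor α w) (hnp : ¬ HasAbPeriod w (qd α k)) :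
    qd α k ≤ {i : ℕ | OccursAt s w i}.ncard := by
  classical
  rcases Nat.eq_zero_or_pos k with rfl | hk1
  · -- k = 0 : the singular factor has length 1
    have hq0 : qd α 0 = 1 := rfl
    obtain ⟨b, hb⟩ := List.length_eq_one_iff.mp (by rw [hs.2.1, hq0])
    have hfin : {i : ℕ | OccursAt s w i}.Finite := by
      apply Set.Finite.subset (Set.finite_Iio w.length)
      intro i hi
      have h1 := hi.1
      rw [hs.2.1, hq0] at h1
      exact Set.mem_Iio.mpr (by omega)
    have hex : ∃ i, ∃ _ : i < w.length, w[i] = b := by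
      by_contra hno
      push_neg at hno
      have hrep : w = List.replicate w.length (!b) := by
        apply List.ext_getElem (by simp)
        intro i h1 h2
        have hne := hno i h1
        rw [List.getElem_replicate]
        cases b <;> revert hne <;> cases w[i] <;> simp
      apply hnp
      rw [hq0]
      refine hasAbPeriod_of_blocks 1 (le_refl 1) (([!b] : List Bool).count true) w
        (List.replicate (w.length + 2) [!b]) (by simp) ?_ ?_ ?_
      · intro u hu
        rw [List.eq_of_mem_replicate hu]
        rfl
      · intro u hu
        rw [List.eq_of_mem_replicate hu]
      · rw [flatten_replicate_singleton]
        apply List.IsPrefix.isInfix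
        refine ⟨List.replicate 2 (!b), ?_⟩
        conv_lhs => rw [hrep]
        rw [← List.replicate_add]
    obtain ⟨i, hilt, hib⟩ := hex
    have hocc : OccursAt s w i := by
      refine ⟨by rw [hs.2.1, hq0]; omega, ?_⟩
      rw [hs.2.1, hq0, hb]
      rw [List.drop_eq_getElem_cons hilt]
      simp [hib]
    rw [hq0]
    exact (Set.ncard_pos hfin).mpr ⟨i, hocc⟩
  · -- k ≥ 1
    have hn1 : 1 ≤ qd α k := qd_pos hirr h0 h2 k
    obtain ⟨x, hrepr⟩ := factor_repr (by linarith : α < 1) hw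
    rcases le_or_gt w.length (qd α k) with hLn | hLn
    · exact absurd (hasAbPeriod_of_short (qd α k) hn1 w hLn) hnp
    have hnL : qd α k ≤ w.length := hLn.le
    set n := qd α k with hn
    set L := w.length with hL
    set Sfin : Finset ℕ :=
      (Finset.range (L - n + 1)).filter (fun i => Bad α k (x + (i:ℝ)*α)) with hSfin
    by_cases hsurj : ∀ r < n, ∃ i ∈ Sfin, i % n = r
    · have hsub : Finset.range n ⊆ Sfin.image (· % n) := by
        intro r hr
        obtain ⟨i, hi, hieq⟩ := hsurj r (Finset.mem_range.mp hr)
        exact Finset.mem_image.mpr ⟨i, hi, hieq⟩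
      have hcard : n ≤ Sfin.card := by
        have h' := Finset.card_le_card hsub
        rw [Finset.card_range] at h'
        exact le_trans h' Finset.card_image_le
      have hocc : ∀ i ∈ Sfin, OccursAt s w i := by
        intro i hi
        rw [hSfin, Finset.mem_filter, Finset.mem_range] at hi
        obtain ⟨hir, hbad⟩ := hi
        have hin : i + n ≤ L := by omega
        have hseq : s = win α (x + (i:ℝ)*α) n :=
          singular_eq_win hirr h0 h2 k hk1 s hs (x + (i:ℝ)*α) hbad
        refine ⟨by rw [hs.2.1]; exact hin, ?_⟩
        rw [hs.2.1, seg_repr hrepr i n hin]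
        exact hseq.symm
      calc n ≤ Sfin.card := hcard
      _ = (↑Sfin : Set ℕ).ncard := (Set.ncard_coe_finset _).symm
      _ ≤ {i | OccursAt s w i}.ncard := by
          apply Set.ncard_le_ncard
          · intro i hi
            exact hocc i (Finset.mem_coe.mp hi)
          · apply Set.Finite.subset (Set.finite_Iio L)
            intro i hi
            have h1 := hi.1
            rw [hs.2.1] at h1
            exact Set.mem_Iio.mpr (by omega)
    · push_neg at hsurj
      obtain ⟨r, hr, hnone⟩ := hsurj
      exfalso
      apply hnp
      apply hasAbPeriod_avoid hirr h0 h2 k hk1 w hrepr hnL r hr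
      intro i hin himod
      by_contra hbad
      exact hnone i
        (by rw [hSfin, Finset.mem_filter, Finset.mem_range]; exact ⟨by omega, by simpa using hbad⟩)
        himod

end SturmianAbelian
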